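/- For every S ∈ Sym₃,σ(ℝ) and every x ∈ ℝ³ with |x| = 1, the Newtonian stress of the pair (Φ₀, P₀) satisfies σ(Φ₀, P₀)(x) · x = 3Sx, where σ(u,p) := 2D(u) − p·Id and the outward unit normal to the unit sphere at x is x itself. -/

import Mathlib

noncomputable section
open MeasureTheory Metric Real Filter

/-- Three-dimensional Euclidean space. -/
abbrev E3 : Type := EuclideanSpace ℝ (Fin 3)

/-- The `i`-th standard basis vector of `ℝ³`. -/
def e3 (i : Fin 3) : E3 := EuclideanSpace.single i 1

/-- The quadratic form `x · S x`. -/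
def quadForm (S : Matrix (Fin 3) (Fin 3) ℝ) (x : E3) : ℝ := ∑ i, ∑ j, x i * S i j * x j

/-- The matrix-vector product `(S x) i`. -/
def mulVec3 (S : Matrix (Fin 3) (Fin 3) ℝ) (x : E3) (i : Fin 3) : ℝ := ∑ j, S i j * x j

/-- The elementary field `Φ₀ = Φ₀^S`. -/
def Phi0 (S : Matrix (Fin 3) (Fin 3) ℝ) (x : E3) (i : Fin 3) : ℝ :=
  -(5/2) * quadForm S x * x i / ‖x‖^5 - mulVec3 S x i / ‖x‖^5
    + (5/2) * quadForm S x * x i / ‖x‖^7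

/-- The elementary pressure `P₀ = P₀^S`. -/
def P0 (S : Matrix (Fin 3) (Fin 3) ℝ) (x : E3) : ℝ := -5 * quadForm S x / ‖x‖^5

/-- Symmetric gradient `D(u) = (∇u + (∇u)ᵀ)/2` of a vector field, as a 3×3 matrix. -/
def symGrad (u : E3 → Fin 3 → ℝ) (x : E3) : Matrix (Fin 3) (Fin 3) ℝ :=
  Matrix.of fun i j => (fderiv ℝ u x (e3 j) i + fderiv ℝ u x (e3 i) j) / 2

/-- Componentwise Laplacian of a vector field: `(Δu)_i = ∑_j ∂_j ∂_j u_i`. -/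
def vecLap (u : E3 → Fin 3 → ℝ) (x : E3) (i : Fin 3) : ℝ :=
  ∑ j, fderiv ℝ (fun y => fderiv ℝ u y (e3 j) i) x (e3 j)

/-- Gradient of a scalar field. -/
def sgrad (p : E3 → ℝ) (x : E3) (i : Fin 3) : ℝ := fderiv ℝ p x (e3 i)

/-- Divergence of a vector field. -/
def divg (u : E3 → Fin 3 → ℝ) (x : E3) : ℝ := ∑ i, fderiv ℝ u x (e3 i) i

/-- Newtonian stress tensor `σ(u,p) = 2 D(u) - p Id`. -/
def stressT (u : E3 → Fin 3 → ℝ) (p : E3 → ℝ) (x : E3) : Matrix (Fin 3) (Fin 3) ℝ :=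
  Matrix.of fun i j => 2 * symGrad u x i j - p x * (if i = j then 1 else 0)

/-- Frobenius norm of a 3×3 matrix. -/
def matNorm (A : Matrix (Fin 3) (Fin 3) ℝ) : ℝ := Real.sqrt (∑ i, ∑ j, (A i j)^2)

lemma hproj (a : Fin 3) (x : E3) : HasFDerivAt (fun y : E3 => y a) (EuclideanSpace.proj a : E3 →L[ℝ] ℝ) x := by
  have h := (EuclideanSpace.proj (𝕜 := ℝ) a).hasFDerivAt (x := x)
  convert h using 2
  rfl

lemma phi0_key (S : Matrix (Fin 3) (Fin 3) ℝ) (hSsym : S.IsSymm) (x : E3) (hx : ‖x‖ = 1) (i : Fin 3) :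
    ∃ L : E3 →L[ℝ] ℝ, HasFDerivAt (fun y => Phi0 S y i) L x ∧
      ∀ j, L (e3 j) = -S i j - 5 * quadForm S x * x i * x j + 5 * mulVec3 S x i * x j := by
  have hx2 : ∑ a, x a ^ 2 = 1 := by
    have h : Real.sqrt (∑ a, x a ^ 2) = 1 := by
      rw [← hx, EuclideanSpace.norm_eq]
      congr 1
      exact Finset.sum_congr rfl fun a _ => by rw [Real.norm_eq_abs, sq_abs]
    have h0 : (0:ℝ) ≤ ∑ a, x a ^ 2 := Finset.sum_nonneg fun a _ => sq_nonneg _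
    nlinarith [Real.sq_sqrt h0]
  have hQ : HasFDerivAt (fun y => quadForm S y)
      (∑ a : Fin 3, ∑ b : Fin 3,
        ((x a * S a b) • (EuclideanSpace.proj b : E3 →L[ℝ] ℝ)
          + x b • (S a b • (EuclideanSpace.proj a : E3 →L[ℝ] ℝ)))) x := by
    exact HasFDerivAt.fun_sum fun a _ => HasFDerivAt.fun_sum fun b _ =>
      ((hproj a x).mul_const (S a b)).mul (hproj b x)
  have hMV : HasFDerivAt (fun y => mulVec3 S y i)
      (∑ b : Fin 3, S i b • (EuclideanSpace.proj b : E3 →L[ℝ] ℝ)) x :=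
    HasFDerivAt.fun_sum fun b _ => (hproj b x).const_mul (S i b)
  have hnsq : HasFDerivAt (fun y : E3 => ∑ a, y a ^ 2)
      (∑ a : Fin 3, (2 * x a ^ 1) • (EuclideanSpace.proj a : E3 →L[ℝ] ℝ)) x :=
    HasFDerivAt.fun_sum (A := fun a (y : E3) => y a ^ 2) fun a _ => by have := (hasDerivAt_pow 2 (x a)).comp_hasFDerivAt x (hproj a x); exact this
  have hnormfun : (fun y : E3 => ‖y‖) = fun y => Real.sqrt (∑ a, y a ^ 2) := by
    funext y; rw [EuclideanSpace.norm_eq]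
    congr 1; exact Finset.sum_congr rfl fun a _ => by rw [Real.norm_eq_abs, sq_abs]
  have hnorm : HasFDerivAt (fun y : E3 => ‖y‖)
      ((1 / (2 * Real.sqrt (∑ a, x a ^ 2))) •
        (∑ a : Fin 3, (2 * x a ^ 1) • (EuclideanSpace.proj a : E3 →L[ℝ] ℝ))) x := by
    rw [hnormfun]
    exact (Real.hasDerivAt_sqrt (by rw [hx2]; norm_num)).comp_hasFDerivAt x hnsq
  have hr5 := (hasDerivAt_pow 5 ‖x‖).comp_hasFDerivAt x hnorm
  have hr7 := (hasDerivAt_pow 7 ‖x‖).comp_hasFDerivAt x hnorm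
  have h5ne : ‖x‖ ^ 5 ≠ 0 := by rw [hx]; norm_num
  have h7ne : ‖x‖ ^ 7 ≠ 0 := by rw [hx]; norm_num
  have hinv5 := (hasDerivAt_inv h5ne).comp_hasFDerivAt x hr5
  have hinv7 := (hasDerivAt_inv h7ne).comp_hasFDerivAt x hr7
  refine ⟨?LL, ?hder, ?hev⟩
  case hder =>
    simp only [Phi0, div_eq_mul_inv]
    exact (((((hQ.const_mul (-(5/2))).mul (hproj i x)).mul hinv5).sub
      (hMV.mul hinv5)).add (((hQ.const_mul ((5:ℝ)/2)).mul (hproj i x)).mul hinv7))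
  case hev =>
    intro j
    simp only [ContinuousLinearMap.add_apply, ContinuousLinearMap.sub_apply,
      ContinuousLinearMap.smul_apply, ContinuousLinearMap.sum_apply,
      PiLp.proj_apply, Function.comp, smul_eq_mul, e3, EuclideanSpace.single_apply,
      hx, hx2, Real.sqrt_one, mul_ite, mul_one, mul_zero, Finset.sum_ite_eq',
      Finset.mem_univ, if_true, one_pow, pow_one]
    have hdd : (∑ x_1 : Fin 3, ∑ x_2 : Fin 3,
        ((if x_2 = j then x x_1 * S x_1 x_2 else 0) + if x_1 = j then x x_2 * S x_1 x_2 else 0))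
        = mulVec3 S x j + mulVec3 S x j := by
      simp only [Finset.sum_add_distrib]
      congr 1
      · rw [mulVec3]
        simp only [Finset.sum_ite_eq', Finset.mem_univ, if_true]
        exact Finset.sum_congr rfl fun a _ => by rw [Matrix.IsSymm.apply hSsym, mul_comm]
      · rw [Finset.sum_comm, mulVec3]
        simp only [Finset.sum_ite_eq', Finset.mem_univ, if_true]
        exact Finset.sum_congr rfl fun b _ => by rw [mul_comm]
    rw [hdd]
    rcases eq_or_ne i j with h | h <;> simp [h] <;> ring

/-- **Stress of `(Φ₀, P₀)` on the unit sphere**: for `|x| = 1`,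
`σ(Φ₀,P₀)(x) · x = 3 Sx`, where `σ(u,p) = 2D(u) - p·Id` and the outward unit
normal at `x` is `x` itself. -/
theorem stress_Phi0_P0_on_sphere (S : Matrix (Fin 3) (Fin 3) ℝ)
    (hSsym : S.IsSymm) (hStr : S.trace = 0) :
    ∀ x : E3, ‖x‖ = 1 →
      ∀ i, (∑ j, stressT (Phi0 S) (P0 S) x i j * x j) = 3 * mulVec3 S x i := by
  
  intro x hx i
  have key := fun k => phi0_key S hSsym x hx k
  choose L hL hLe using key
  have hPhi : HasFDerivAt (Phi0 S) (ContinuousLinearMap.pi L) x := hasFDerivAt_pi.2 hL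
  have hfd : fderiv ℝ (Phi0 S) x = ContinuousLinearMap.pi L := hPhi.fderiv
  have hentry : ∀ a b : Fin 3, fderiv ℝ (Phi0 S) x (e3 b) a
      = -S a b - 5 * quadForm S x * x a * x b + 5 * mulVec3 S x a * x b := by
    intro a b
    rw [hfd]
    simp [ContinuousLinearMap.pi_apply, hLe]
  have hx2 : x 0 ^ 2 + x 1 ^ 2 + x 2 ^ 2 = 1 := by
    have h : Real.sqrt (∑ a, x a ^ 2) = 1 := by
      rw [← hx, EuclideanSpace.norm_eq]
      congr 1
      exact Finset.sum_congr rfl fun a _ => by rw [Real.norm_eq_abs, sq_abs]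
    have h0 : (0:ℝ) ≤ ∑ a, x a ^ 2 := Finset.sum_nonneg fun a _ => sq_nonneg _
    have h2 : ∑ a, x a ^ 2 = 1 := by nlinarith [Real.sq_sqrt h0]
    simpa [Fin.sum_univ_three] using h2
  have hS10 : S 1 0 = S 0 1 := hSsym.apply 0 1
  have hS20 : S 2 0 = S 0 2 := hSsym.apply 0 2
  have hS21 : S 2 1 = S 1 2 := hSsym.apply 1 2
  have hmv0 : mulVec3 S x 0 = S 0 0 * x 0 + S 0 1 * x 1 + S 0 2 * x 2 := by
    simp [mulVec3, Fin.sum_univ_three]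
  have hmv1 : mulVec3 S x 1 = S 0 1 * x 0 + S 1 1 * x 1 + S 1 2 * x 2 := by
    simp [mulVec3, Fin.sum_univ_three, hS10]
  have hmv2 : mulVec3 S x 2 = S 0 2 * x 0 + S 1 2 * x 1 + S 2 2 * x 2 := by
    simp [mulVec3, Fin.sum_univ_three, hS20, hS21]
  have hQx : mulVec3 S x 0 * x 0 + mulVec3 S x 1 * x 1 + mulVec3 S x 2 * x 2
      = quadForm S x := by
    simp only [quadForm, Fin.sum_univ_three, hmv0, hmv1, hmv2, hS10, hS20, hS21]
    ring
  simp only [stressT, symGrad, Matrix.of_apply, hentry, P0, hx, one_pow, div_one,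
    Fin.sum_univ_three]
  fin_cases i <;> simp only [Fin.mk_zero, Fin.mk_one, Fin.reduceFinMk, Fin.reduceEq, reduceIte, if_true, if_false, Fin.isValue, hS10, hS20, hS21] <;> norm_num
  · linear_combination (5*mulVec3 S x 0 - 10*quadForm S x*x 0)*hx2 + 5*x 0*hQx + 2*hmv0
  · linear_combination (5*mulVec3 S x 1 - 10*quadForm S x*x 1)*hx2 + 5*x 1*hQx + 2*hmv1
  · linear_combination (5*mulVec3 S x 2 - 10*quadForm S x*x 2)*hx2 + 5*x 2*hQx + 2*hmv2
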